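/- Let p be an odd prime, and let i ≥ 0 and r ≥ 0 be integers. For all a, b, c, d ∈ 𝔽_p and every P ∈ V_r^{(i)}, the substituted polynomial P(aX+cY, bX+dY) again lies in V_r^{(i)}; in other words, V_r^{(i)} is stable under the substitution action of GL_2(𝔽_p) on V_r. -/
import Mathlib


open MvPolynomial

/-- The substitution action: `P(X,Y) ↦ P(aX+cY, bX+dY)` on `F[X,Y] = MvPolynomial (Fin 2) F`,
for `a b c d ∈ 𝔽_p` viewed in `F` via the canonical map. -/
noncomputable def substACT (p : ℕ) [Fact p.Prime] (F : Type*) [Field F]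
    [Algebra (ZMod p) F] (a b c d : ZMod p) :
    MvPolynomial (Fin 2) F →ₐ[F] MvPolynomial (Fin 2) F :=
  aeval (fun i : Fin 2 =>
    if i = 0 then C (algebraMap (ZMod p) F a) * X 0 + C (algebraMap (ZMod p) F c) * X 1
    else C (algebraMap (ZMod p) F b) * X 0 + C (algebraMap (ZMod p) F d) * X 1)

lemma substACT_theta (p : ℕ) [Fact p.Prime] (F : Type*) [Field F]
    [Algebra (ZMod p) F] (a b c d : ZMod p) :
    substACT p F a b c d (X 0 ^ p * X 1 - X 0 * X 1 ^ p) =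
      C (algebraMap (ZMod p) F (a * d - b * c)) * (X 0 ^ p * X 1 - X 0 * X 1 ^ p) := by
  haveI : CharP F p := charP_of_injective_algebraMap (algebraMap (ZMod p) F).injective p
  simp only [substACT, map_sub, map_mul, map_pow, aeval_X, reduceIte,
    show ((1 : Fin 2) = 0) = False from by decide, if_false]
  simp only [add_pow_char, mul_pow, ← C_pow, ← map_pow (algebraMap (ZMod p) F), ZMod.pow_card]
  ring

/-- Let `p` be an odd prime, `i ≥ 0`, `r ≥ 0`.  For all `a b c d ∈ 𝔽_p` and
every `P ∈ V_r^{(i)}` (i.e. `P` homogeneous of degree `r` and `θ^i ∣ P`, where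
`θ = X^p Y − X Y^p`), the substituted polynomial `P(aX+cY, bX+dY)` again lies in
`V_r^{(i)}`: the submodule `V_r^{(i)}` is stable under the substitution action. -/
theorem zigzag_stmt1 (p : ℕ) [Fact p.Prime] (hp : Odd p)
    (F : Type*) [Field F] [Algebra (ZMod p) F] [IsAlgClosure (ZMod p) F]
    (i r : ℕ) (a b c d : ZMod p)
    (θ : MvPolynomial (Fin 2) F) (hθ : θ = X 0 ^ p * X 1 - X 0 * X 1 ^ p)
    (P : MvPolynomial (Fin 2) F)
    (hhom : P.IsHomogeneous r) (hdvd : θ ^ i ∣ P) :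
    (substACT p F a b c d P).IsHomogeneous r ∧ θ ^ i ∣ substACT p F a b c d P := by
  constructor
  · set g : Fin 2 → MvPolynomial (Fin 2) F := fun j =>
        if j = 0 then C (algebraMap (ZMod p) F a) * X 0 + C (algebraMap (ZMod p) F c) * X 1
        else C (algebraMap (ZMod p) F b) * X 0 + C (algebraMap (ZMod p) F d) * X 1 with hg
    have := hhom.aeval (R := F) g (n := 1) ?_
    · simpa [substACT, hg, one_mul] using this
    · intro j
      rw [hg]
      dsimp only
      split
      · exact (isHomogeneous_C_mul_X _ _).add (isHomogeneous_C_mul_X _ _)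
      · exact (isHomogeneous_C_mul_X _ _).add (isHomogeneous_C_mul_X _ _)
  · obtain ⟨Q, rfl⟩ := hdvd
    rw [map_mul, map_pow, hθ, substACT_theta, mul_pow]
    exact ⟨C (algebraMap (ZMod p) F (a * d - b * c)) ^ i * substACT p F a b c d Q,
      by rw [← hθ]; ring⟩
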